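/- Let E : ℝ × ℝ → ℝ be twice continuously differentiable on a neighborhood of (x₀, L₀) with E(x₀, L₀) = 0, ∂E/∂L(x₀, L₀) = 0, ∂²E/∂L²(x₀, L₀) > 0, and ∂E/∂x(x₀, L₀) < 0. Then there exist δ > 0, ρ > 0 and continuously differentiable functions L₋, L₊ : (x₀, x₀ + δ) → (L₀ − ρ, L₀ + ρ) with L₋(x) < L₊(x), such that for every x ∈ (x₀, x₀ + δ): (i) {L ∈ (L₀ − ρ, L₀ + ρ) : E(x, L) = 0} = {L₋(x), L₊(x)}; (ii) L₋(x) → L₀ and L₊(x) → L₀ as x → x₀⁺; (iii) L₊'(x) → +∞ and L₋'(x) → −∞ as x → x₀⁺; and (iv) (L₊(x) − L₋(x))/√(x − x₀) → 2√(2·|∂E/∂x(x₀, L₀)| / ∂²E/∂L²(x₀, L₀)) as x → x₀⁺. (As an eclipsing arc shrinks to zero length, the root branches of the eclipsing function merge and the Leibniz boundary derivatives dL*/dx of the averaged costate dynamics become singular.) -/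

import Mathlib

open Filter Topology Set


/-- Second-order Taylor lower bound around the left endpoint. -/
lemma taylor2_lower_left {f f' g : ℝ → ℝ} {a b m : ℝ} (hab : a ≤ b)
    (hf : ∀ t ∈ Icc a b, HasDerivAt f (f' t) t)
    (hf' : ∀ t ∈ Icc a b, HasDerivAt f' (g t) t)
    (hm : ∀ t ∈ Icc a b, m ≤ g t) :
    m / 2 * (b - a) ^ 2 ≤ f b - f a - f' a * (b - a) := by
  set h : ℝ → ℝ := fun t => f t - f a - f' a * (t - a) - m / 2 * (t - a) ^ 2 with hh
  set h' : ℝ → ℝ := fun t => f' t - f' a - m * (t - a) with hh'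
  have hd : ∀ t ∈ Icc a b, HasDerivAt h (h' t) t := by
    intro t ht
    have H := (((hf t ht).sub (hasDerivAt_const _ (f a))).sub
        (((hasDerivAt_id t).sub (hasDerivAt_const _ a)).const_mul (f' a))).sub
        ((((hasDerivAt_id t).sub (hasDerivAt_const _ a)).pow 2).const_mul (m / 2))
    refine H.congr_deriv ?_
    simp [hh']; ring
  have hd' : ∀ t ∈ Icc a b, HasDerivAt h' (g t - m) t := by
    intro t ht
    have H := ((hf' t ht).sub (hasDerivAt_const _ (f' a))).sub
        (((hasDerivAt_id t).sub (hasDerivAt_const _ a)).const_mul m)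
    refine H.congr_deriv ?_
    ring
  have hmono' : MonotoneOn h' (Icc a b) := by
    apply monotoneOn_of_deriv_nonneg (convex_Icc a b)
      (fun t ht => (hd' t ht).continuousAt.continuousWithinAt)
      (fun t ht => ((hd' t (interior_subset ht)).differentiableAt.differentiableWithinAt))
    intro t ht
    rw [(hd' t (interior_subset ht)).deriv]
    have := hm t (interior_subset ht)
    linarith
  have h'a : h' a = 0 := by simp [hh']
  have h'nonneg : ∀ t ∈ Icc a b, 0 ≤ h' t := fun t ht => by
    have := hmono' (left_mem_Icc.2 hab) ht ht.1
    rw [h'a] at this; exact this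
  have hmono : MonotoneOn h (Icc a b) := by
    apply monotoneOn_of_deriv_nonneg (convex_Icc a b)
      (fun t ht => (hd t ht).continuousAt.continuousWithinAt)
      (fun t ht => ((hd t (interior_subset ht)).differentiableAt.differentiableWithinAt))
    intro t ht
    rw [(hd t (interior_subset ht)).deriv]
    exact h'nonneg t (interior_subset ht)
  have ha : h a = 0 := by simp [hh]
  have := hmono (left_mem_Icc.2 hab) (right_mem_Icc.2 hab) hab
  rw [ha] at this
  simp only [hh] at this
  linarith

/-- Second-order Taylor upper bound around the left endpoint. -/
lemma taylor2_upper_left {f f' g : ℝ → ℝ} {a b M : ℝ} (hab : a ≤ b)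
    (hf : ∀ t ∈ Icc a b, HasDerivAt f (f' t) t)
    (hf' : ∀ t ∈ Icc a b, HasDerivAt f' (g t) t)
    (hM : ∀ t ∈ Icc a b, g t ≤ M) :
    f b - f a - f' a * (b - a) ≤ M / 2 * (b - a) ^ 2 := by
  have := taylor2_lower_left (f := fun t => -f t) (f' := fun t => -f' t) (g := fun t => -g t)
    (m := -M) hab (fun t ht => (hf t ht).neg) (fun t ht => (hf' t ht).neg)
    (fun t ht => neg_le_neg (hM t ht))
  linarith

/-- Second-order Taylor lower bound around the right endpoint. -/
lemma taylor2_lower_right {f f' g : ℝ → ℝ} {a b m : ℝ} (hab : a ≤ b)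
    (hf : ∀ t ∈ Icc a b, HasDerivAt f (f' t) t)
    (hf' : ∀ t ∈ Icc a b, HasDerivAt f' (g t) t)
    (hm : ∀ t ∈ Icc a b, m ≤ g t) :
    m / 2 * (b - a) ^ 2 ≤ f a - f b + f' b * (b - a) := by
  -- reflect: F t = f (a + b - t)
  have hσ : ∀ t : ℝ, HasDerivAt (fun t : ℝ => a + b - t) (-1) t := by
    intro t
    exact ((hasDerivAt_const t (a + b)).sub (hasDerivAt_id t)).congr_deriv (by ring)
  have hmem : ∀ t ∈ Icc a b, a + b - t ∈ Icc a b := by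
    intro t ht; constructor <;> [linarith [ht.2]; linarith [ht.1]]
  have := taylor2_lower_left (f := fun t => f (a + b - t))
    (f' := fun t => -f' (a + b - t)) (g := fun t => g (a + b - t)) (m := m) hab
    (fun t ht => ((hf _ (hmem t ht)).comp t (hσ t)).congr_deriv (by ring))
    (fun t ht => (((hf' _ (hmem t ht)).comp t (hσ t)).neg).congr_deriv (by ring))
    (fun t ht => hm _ (hmem t ht))
  simp only [add_sub_cancel_right, sub_add_cancel_left] at this
  have h1 : a + b - a = b := by ring
  rw [h1] at this
  linarith

/-- Second-order Taylor upper bound around the right endpoint. -/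
lemma taylor2_upper_right {f f' g : ℝ → ℝ} {a b M : ℝ} (hab : a ≤ b)
    (hf : ∀ t ∈ Icc a b, HasDerivAt f (f' t) t)
    (hf' : ∀ t ∈ Icc a b, HasDerivAt f' (g t) t)
    (hM : ∀ t ∈ Icc a b, g t ≤ M) :
    f a - f b + f' b * (b - a) ≤ M / 2 * (b - a) ^ 2 := by
  have := taylor2_lower_right (f := fun t => -f t) (f' := fun t => -f' t) (g := fun t => -g t)
    (m := -M) hab (fun t ht => (hf t ht).neg) (fun t ht => (hf' t ht).neg)
    (fun t ht => neg_le_neg (hM t ht))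
  linarith

-- evaluation of a CLM on ℝ×ℝ
lemma clm_apply_eq (D : ℝ × ℝ →L[ℝ] ℝ) (u : ℝ × ℝ) :
    D u = u.1 * D (1, 0) + u.2 * D (0, 1) := by
  have h : u = u.1 • ((1:ℝ), (0:ℝ)) + u.2 • ((0:ℝ), (1:ℝ)) := by
    ext <;> simp
  conv_lhs => rw [h]
  rw [map_add, map_smul, map_smul, smul_eq_mul, smul_eq_mul]


set_option maxHeartbeats 1000000

/-- Near a degenerate root `(x₀, L₀)` of the eclipsing function
`E` with `∂E/∂L = 0`, `∂²E/∂L² > 0`, `∂E/∂x < 0`, for `x` slightly larger than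
`x₀` there are exactly two C¹ root branches `L₋(x) < L₊(x)` merging at `L₀` as
`x → x₀⁺`, whose derivatives blow up to `∓∞`, and whose separation satisfies
`(L₊ - L₋)/√(x - x₀) → 2√(2|∂E/∂x|/∂²E/∂L²)`: the Leibniz boundary terms of the
averaged costate dynamics become singular as an eclipse arc vanishes. -/
theorem eclipse_root_branches_singularity
    (E : ℝ × ℝ → ℝ) (x₀ L₀ : ℝ)
    (hC2 : ∃ U ∈ 𝓝 (x₀, L₀), ContDiffOn ℝ 2 E U)
    (h0 : E (x₀, L₀) = 0)
    (hEL : deriv (fun L => E (x₀, L)) L₀ = 0)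
    (hELL : 0 < deriv (deriv (fun L => E (x₀, L))) L₀)
    (hEx : deriv (fun x => E (x, L₀)) x₀ < 0) :
    ∃ δ > 0, ∃ ρ > 0, ∃ Lm Lp : ℝ → ℝ,
      ContDiffOn ℝ 1 Lm (Set.Ioo x₀ (x₀ + δ)) ∧
      ContDiffOn ℝ 1 Lp (Set.Ioo x₀ (x₀ + δ)) ∧
      (∀ x ∈ Set.Ioo x₀ (x₀ + δ),
        Lm x < Lp x ∧
        Lm x ∈ Set.Ioo (L₀ - ρ) (L₀ + ρ) ∧
        Lp x ∈ Set.Ioo (L₀ - ρ) (L₀ + ρ) ∧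
        {L ∈ Set.Ioo (L₀ - ρ) (L₀ + ρ) | E (x, L) = 0} = {Lm x, Lp x}) ∧
      Tendsto Lm (𝓝[>] x₀) (𝓝 L₀) ∧
      Tendsto Lp (𝓝[>] x₀) (𝓝 L₀) ∧
      Tendsto (deriv Lp) (𝓝[>] x₀) atTop ∧
      Tendsto (deriv Lm) (𝓝[>] x₀) atBot ∧
      Tendsto (fun x => (Lp x - Lm x) / Real.sqrt (x - x₀)) (𝓝[>] x₀)
        (𝓝 (2 * Real.sqrt (2 * |deriv (fun x => E (x, L₀)) x₀| /
          deriv (deriv (fun L => E (x₀, L))) L₀))) := by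
  classical
  obtain ⟨U, hU, hEC2⟩ := hC2
  obtain ⟨V, hVU, hVopen, hV0⟩ := mem_nhds_iff.1 hU
  have hEV : ContDiffOn ℝ 2 E V := hEC2.mono hVU
  set F : ℝ × ℝ → (ℝ × ℝ →L[ℝ] ℝ) := fun p => fderiv ℝ E p with hF
  have hFC1 : ContDiffOn ℝ 1 F V := hEV.fderiv_of_isOpen hVopen (by norm_num)
  set EL : ℝ × ℝ → ℝ := fun p => F p (0, 1) with hELdef
  set Ex : ℝ × ℝ → ℝ := fun p => F p (1, 0) with hExdef
  have hELC1 : ContDiffOn ℝ 1 EL V :=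
    (ContinuousLinearMap.apply ℝ ℝ ((0:ℝ), (1:ℝ))).contDiff.comp_contDiffOn hFC1
  set ELL : ℝ × ℝ → ℝ := fun p => fderiv ℝ EL p (0, 1) with hELLdef
  have hELLcont : ContinuousOn ELL V :=
    (ContinuousLinearMap.apply ℝ ℝ ((0:ℝ), (1:ℝ))).continuous.comp_continuousOn
      (hELC1.continuousOn_fderiv_of_isOpen hVopen le_rfl)
  have hELcont : ContinuousOn EL V := hELC1.continuousOn
  have hExcont : ContinuousOn Ex V :=
    (ContinuousLinearMap.apply ℝ ℝ ((1:ℝ), (0:ℝ))).continuous.comp_continuousOn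
      hFC1.continuousOn
  have hEcont : ContinuousOn E V := hEV.continuousOn
  -- pointwise derivatives
  have hfd : ∀ p ∈ V, HasFDerivAt E (F p) p := fun p hp =>
    ((hEV.contDiffAt (hVopen.mem_nhds hp)).differentiableAt (by norm_num)).hasFDerivAt
  have hL : ∀ x L, (x, L) ∈ V → HasDerivAt (fun L' => E (x, L')) (EL (x, L)) L := by
    intro x L hp
    have hline : HasDerivAt (fun L' : ℝ => ((x : ℝ), L')) ((0:ℝ), (1:ℝ)) L :=
      (hasDerivAt_const L x).prodMk (hasDerivAt_id L)
    exact (hfd _ hp).comp_hasDerivAt L hline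
  have hX : ∀ x L, (x, L) ∈ V → HasDerivAt (fun x' => E (x', L)) (Ex (x, L)) x := by
    intro x L hp
    have hline : HasDerivAt (fun x' : ℝ => (x', (L : ℝ))) ((1:ℝ), (0:ℝ)) x :=
      (hasDerivAt_id x).prodMk (hasDerivAt_const x L)
    exact (hfd _ hp).comp_hasDerivAt x hline
  have hfdEL : ∀ p ∈ V, HasFDerivAt EL (fderiv ℝ EL p) p := fun p hp =>
    ((hELC1.contDiffAt (hVopen.mem_nhds hp)).differentiableAt (by norm_num)).hasFDerivAt
  have hLL : ∀ x L, (x, L) ∈ V → HasDerivAt (fun L' => EL (x, L')) (ELL (x, L)) L := by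
    intro x L hp
    have hline : HasDerivAt (fun L' : ℝ => ((x : ℝ), L')) ((0:ℝ), (1:ℝ)) L :=
      (hasDerivAt_const L x).prodMk (hasDerivAt_id L)
    exact (hfdEL _ hp).comp_hasDerivAt L hline
  have hXL0 : HasDerivAt (fun x => EL (x, L₀)) (fderiv ℝ EL (x₀, L₀) (1, 0)) x₀ := by
    have hline : HasDerivAt (fun x' : ℝ => (x', (L₀ : ℝ))) ((1:ℝ), (0:ℝ)) x₀ :=
      (hasDerivAt_id x₀).prodMk (hasDerivAt_const x₀ L₀)
    exact (hfdEL _ hV0).comp_hasDerivAt x₀ hline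
  -- identifications
  have hEL0 : EL (x₀, L₀) = 0 := by rw [← (hL x₀ L₀ hV0).deriv]; exact hEL
  have hEx0 : Ex (x₀, L₀) = deriv (fun x => E (x, L₀)) x₀ := ((hX x₀ L₀ hV0).deriv).symm
  have hc : deriv (deriv (fun L => E (x₀, L))) L₀ = ELL (x₀, L₀) := by
    have hfiber : ∀ᶠ L in 𝓝 L₀, (x₀, L) ∈ V := by
      have : Continuous fun L : ℝ => ((x₀ : ℝ), L) := by fun_prop
      exact this.continuousAt.preimage_mem_nhds (hVopen.mem_nhds hV0)
    have heq : (deriv fun L => E (x₀, L)) =ᶠ[𝓝 L₀] fun L => EL (x₀, L) :=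
      hfiber.mono fun L hp => (hL x₀ L hp).deriv
    rw [heq.deriv_eq, (hLL x₀ L₀ hV0).deriv]
  -- constants
  set A : ℝ := -(deriv (fun x => E (x, L₀)) x₀) with hA
  have hApos : 0 < A := by simp only [hA]; linarith
  set c : ℝ := deriv (deriv (fun L => E (x₀, L))) L₀ with hcdef
  have hcpos : 0 < c := hELL
  have hcELL : ELL (x₀, L₀) = c := hc.symm
  have hExA : Ex (x₀, L₀) = -A := by rw [hEx0]; simp [hA]
  -- rectangles where ELL is close to c
  have hrect : ∀ ε > 0, ∃ r > 0, (Icc (x₀-r) (x₀+r) ×ˢ Icc (L₀-r) (L₀+r) ⊆ V) ∧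
      ∀ p ∈ Icc (x₀-r) (x₀+r) ×ˢ Icc (L₀-r) (L₀+r), |ELL p - c| < ε := by
    intro ε hε
    have hopen : IsOpen (V ∩ ELL ⁻¹' Metric.ball c ε) :=
      hELLcont.isOpen_inter_preimage hVopen Metric.isOpen_ball
    have hmem : (x₀, L₀) ∈ V ∩ ELL ⁻¹' Metric.ball c ε :=
      ⟨hV0, by simp [Metric.mem_ball, hcELL, hε]⟩
    obtain ⟨η, hη, hball⟩ := Metric.isOpen_iff.1 hopen _ hmem
    have hsub : Icc (x₀-η/2) (x₀+η/2) ×ˢ Icc (L₀-η/2) (L₀+η/2) ⊆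
        V ∩ ELL ⁻¹' Metric.ball c ε := by
      intro p hp
      apply hball
      rw [Metric.mem_ball, Prod.dist_eq]
      have h1 : dist p.1 x₀ ≤ η/2 := by
        rw [Real.dist_eq, abs_le]; constructor <;> [linarith [hp.1.1]; linarith [hp.1.2]]
      have h2 : dist p.2 L₀ ≤ η/2 := by
        rw [Real.dist_eq, abs_le]; constructor <;> [linarith [hp.2.1]; linarith [hp.2.2]]
      calc max (dist p.1 x₀) (dist p.2 L₀) ≤ η/2 := max_le h1 h2
        _ < η := by linarith
    exact ⟨η/2, by linarith, fun p hp => (hsub hp).1,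
      fun p hp => by have := (hsub hp).2; rwa [Set.mem_preimage, Metric.mem_ball, Real.dist_eq] at this⟩
  obtain ⟨r, hrpos, hrV, hrELL⟩ := hrect (c/2) (by linarith)
  have hELLlow : ∀ p ∈ Icc (x₀-r) (x₀+r) ×ˢ Icc (L₀-r) (L₀+r), c/2 ≤ ELL p := by
    intro p hp
    have := abs_lt.1 (hrELL p hp)
    linarith [this.1]
  set ρ : ℝ := r with hρ
  -- positivity of E (x₀, L₀ ± ρ)
  have hrect0 : ∀ L ∈ Icc (L₀ - ρ) (L₀ + ρ), (x₀, L) ∈ Icc (x₀-r) (x₀+r) ×ˢ Icc (L₀-r) (L₀+r) :=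
    fun L hL => ⟨⟨by linarith, by linarith⟩, hL⟩
  have hEplus' : ∀ b, L₀ < b → b ≤ L₀ + ρ → 0 < E (x₀, b) := by
    intro b hb1 hb2
    have hsubI : Icc L₀ b ⊆ Icc (L₀-ρ) (L₀+ρ) := Icc_subset_Icc (by linarith) hb2
    have hT := taylor2_lower_left (f := fun L => E (x₀, L)) (f' := fun L => EL (x₀, L))
      (g := fun L => ELL (x₀, L)) (a := L₀) (b := b) (m := c/2) (le_of_lt hb1)
      (fun t ht => hL x₀ t (hrV (hrect0 t (hsubI ht))))
      (fun t ht => hLL x₀ t (hrV (hrect0 t (hsubI ht))))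
      (fun t ht => hELLlow _ (hrect0 t (hsubI ht)))
    rw [h0, hEL0] at hT
    have h2 : 0 < (b - L₀)^2 := pow_pos (sub_pos.2 hb1) 2
    have h3 : 0 < c/2/2 * (b - L₀)^2 := mul_pos (by linarith) h2
    linarith
  have hEminus' : ∀ a, L₀ - ρ ≤ a → a < L₀ → 0 < E (x₀, a) := by
    intro a ha1 ha2
    have hsubI : Icc a L₀ ⊆ Icc (L₀-ρ) (L₀+ρ) := Icc_subset_Icc ha1 (by linarith)
    have hT := taylor2_lower_right (f := fun L => E (x₀, L)) (f' := fun L => EL (x₀, L))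
      (g := fun L => ELL (x₀, L)) (a := a) (b := L₀) (m := c/2) (le_of_lt ha2)
      (fun t ht => hL x₀ t (hrV (hrect0 t (hsubI ht))))
      (fun t ht => hLL x₀ t (hrV (hrect0 t (hsubI ht))))
      (fun t ht => hELLlow _ (hrect0 t (hsubI ht)))
    rw [h0, hEL0] at hT
    have h2 : 0 < (L₀ - a)^2 := pow_pos (sub_pos.2 ha2) 2
    have h3 : 0 < c/2/2 * (L₀ - a)^2 := mul_pos (by linarith) h2
    linarith
  have hEplus : 0 < E (x₀, L₀ + ρ) := by
    have hT := taylor2_lower_left (f := fun L => E (x₀, L)) (f' := fun L => EL (x₀, L))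
      (g := fun L => ELL (x₀, L)) (a := L₀) (b := L₀ + ρ) (m := c/2) (by linarith)
      (fun t ht => hL x₀ t (hrV (hrect0 t ⟨by linarith [ht.1], by linarith [ht.2]⟩)))
      (fun t ht => hLL x₀ t (hrV (hrect0 t ⟨by linarith [ht.1], by linarith [ht.2]⟩)))
      (fun t ht => hELLlow _ (hrect0 t ⟨by linarith [ht.1], by linarith [ht.2]⟩))
    rw [h0, hEL0] at hT
    have hsq : (L₀ + ρ - L₀)^2 = ρ^2 := by ring
    rw [hsq] at hT
    have : 0 < c/2/2 * ρ^2 := by positivity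
    linarith
  have hEminus : 0 < E (x₀, L₀ - ρ) := by
    have hT := taylor2_lower_right (f := fun L => E (x₀, L)) (f' := fun L => EL (x₀, L))
      (g := fun L => ELL (x₀, L)) (a := L₀ - ρ) (b := L₀) (m := c/2) (by linarith)
      (fun t ht => hL x₀ t (hrV (hrect0 t ⟨by linarith [ht.1], by linarith [ht.2]⟩)))
      (fun t ht => hLL x₀ t (hrV (hrect0 t ⟨by linarith [ht.1], by linarith [ht.2]⟩)))
      (fun t ht => hELLlow _ (hrect0 t ⟨by linarith [ht.1], by linarith [ht.2]⟩))
    rw [h0, hEL0] at hT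
    have hsq : (L₀ - (L₀ - ρ))^2 = ρ^2 := by ring
    rw [hsq] at hT
    have : 0 < c/2/2 * ρ^2 := by positivity
    linarith
  -- choose δ
  have hslopeE : Tendsto (slope (fun x => E (x, L₀)) x₀) (𝓝[>] x₀) (𝓝 (-A)) := by
    have h1 : HasDerivAt (fun x => E (x, L₀)) (-A) x₀ := by
      rw [← hExA]; exact hX x₀ L₀ hV0
    exact (hasDerivAt_iff_tendsto_slope.1 h1).mono_left
      (nhdsWithin_mono _ (fun y hy => ne_of_gt hy))
  have hev1 : ∀ᶠ x in 𝓝[>] x₀, E (x, L₀) < 0 ∧ 0 < E (x, L₀ + ρ) ∧ 0 < E (x, L₀ - ρ) ∧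
      x ∈ Ioo x₀ (x₀ + r) := by
    have e1 : ∀ᶠ x in 𝓝[>] x₀, E (x, L₀) < 0 := by
      have hs : ∀ᶠ x in 𝓝[>] x₀, slope (fun x => E (x, L₀)) x₀ x < 0 :=
        hslopeE.eventually_lt_const (by linarith)
      have hgt : ∀ᶠ x in 𝓝[>] x₀, x₀ < x := eventually_mem_nhdsWithin
      filter_upwards [hs, hgt] with x hx hx'
      rw [slope_def_field] at hx
      have h2 : (E (x, L₀) - E (x₀, L₀)) / (x - x₀) < 0 := hx
      rw [h0, sub_zero] at h2
      by_contra hcon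
      push_neg at hcon
      have : 0 ≤ E (x, L₀) / (x - x₀) := div_nonneg hcon (by linarith)
      linarith
    have e2 : ∀ᶠ x in 𝓝[>] x₀, 0 < E (x, L₀ + ρ) := by
      apply eventually_nhdsWithin_of_eventually_nhds
      have hcontx : ContinuousAt (fun x => E (x, L₀ + ρ)) x₀ := by
        have h5 : ContinuousAt E (x₀, L₀ + ρ) :=
          hEcont.continuousAt (hVopen.mem_nhds (hrV (hrect0 _ ⟨by linarith, le_refl _⟩)))
        exact h5.tendsto.comp ((continuous_id.prodMk continuous_const).tendsto x₀)
      exact hcontx.eventually_const_lt hEplus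
    have e3 : ∀ᶠ x in 𝓝[>] x₀, 0 < E (x, L₀ - ρ) := by
      apply eventually_nhdsWithin_of_eventually_nhds
      have hcontx : ContinuousAt (fun x => E (x, L₀ - ρ)) x₀ := by
        have h5 : ContinuousAt E (x₀, L₀ - ρ) :=
          hEcont.continuousAt (hVopen.mem_nhds (hrV (hrect0 _ ⟨le_refl _, by linarith⟩)))
        exact h5.tendsto.comp ((continuous_id.prodMk continuous_const).tendsto x₀)
      exact hcontx.eventually_const_lt hEminus
    have e4 : Ioo x₀ (x₀ + r) ∈ 𝓝[>] x₀ := Ioo_mem_nhdsGT (by linarith)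
    filter_upwards [e1, e2, e3, e4] with x h1 h2 h3 h4
    exact ⟨h1, h2, h3, h4⟩
  obtain ⟨uu, huu, hIoosub⟩ := mem_nhdsGT_iff_exists_Ioo_subset.1 hev1
  set δ : ℝ := uu - x₀ with hδdef
  have hδpos : 0 < δ := by
    have := mem_Ioi.1 huu; simp only [hδdef]; linarith
  have hIδ : Ioo x₀ (x₀ + δ) = Ioo x₀ uu := by rw [hδdef]; congr 1; ring
  have hIprop : ∀ x ∈ Ioo x₀ (x₀ + δ), E (x, L₀) < 0 ∧ 0 < E (x, L₀ + ρ) ∧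
      0 < E (x, L₀ - ρ) ∧ x ∈ Ioo x₀ (x₀ + r) := by
    intro x hx; exact hIoosub (hIδ ▸ hx)
  -- per-x rectangle membership
  have hxrect : ∀ x ∈ Ioo x₀ (x₀ + δ), ∀ L ∈ Icc (L₀ - ρ) (L₀ + ρ),
      (x, L) ∈ Icc (x₀-r) (x₀+r) ×ˢ Icc (L₀-r) (L₀+r) := by
    intro x hx L hL
    obtain ⟨-, -, -, hxr⟩ := hIprop x hx
    exact ⟨⟨by linarith [hxr.1], by linarith [hxr.2]⟩, hL⟩
  have hxV : ∀ x ∈ Ioo x₀ (x₀+δ), ∀ L ∈ Icc (L₀-ρ) (L₀+ρ), (x, L) ∈ V :=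
    fun x hx L hL => hrV (hxrect x hx L hL)
  have hfxcont : ∀ x ∈ Ioo x₀ (x₀+δ), ContinuousOn (fun L => E (x, L)) (Icc (L₀-ρ) (L₀+ρ)) :=
    fun x hx t ht => (hL x t (hxV x hx t ht)).continuousAt.continuousWithinAt
  -- strict monotonicity of EL (x, ·)
  have hELmono : ∀ x ∈ Ioo x₀ (x₀+δ), StrictMonoOn (fun L => EL (x, L)) (Icc (L₀-ρ) (L₀+ρ)) := by
    intro x hx
    apply strictMonoOn_of_deriv_pos (convex_Icc _ _)
    · exact fun t ht => (hLL x t (hxV x hx t ht)).continuousAt.continuousWithinAt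
    · intro t ht
      rw [interior_Icc] at ht
      rw [(hLL x t (hxV x hx t (Ioo_subset_Icc_self ht))).deriv]
      have := hELLlow _ (hxrect x hx t (Ioo_subset_Icc_self ht))
      linarith
  -- EL is positive at roots in [L₀, L₀+ρ]
  have hposEL : ∀ x ∈ Ioo x₀ (x₀+δ), ∀ a ∈ Icc L₀ (L₀+ρ), E (x, a) = 0 → 0 < EL (x, a) := by
    intro x hx a ha hroot
    obtain ⟨hneg, -, -, -⟩ := hIprop x hx
    have haL : L₀ < a := by
      rcases eq_or_lt_of_le ha.1 with h | h
      · exfalso; rw [← h] at hroot; linarith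
      · exact h
    have hsubI : Icc L₀ a ⊆ Icc (L₀-ρ) (L₀+ρ) := by
      apply Icc_subset_Icc <;> [linarith; linarith [ha.2]]
    obtain ⟨η, hη, hslope⟩ := exists_hasDerivAt_eq_slope (fun L => E (x, L))
      (fun L => EL (x, L)) haL ((hfxcont x hx).mono hsubI)
      (fun t ht => hL x t (hxV x hx t (hsubI (Ioo_subset_Icc_self ht))))
    have hη1 : EL (x, η) = (E (x, a) - E (x, L₀)) / (a - L₀) := hslope
    have hηpos : 0 < EL (x, η) := by
      rw [hη1, hroot]
      apply div_pos <;> [linarith; linarith [hη.1, hη.2]]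
    have := hELmono x hx (hsubI (Ioo_subset_Icc_self hη))
      (hsubI ⟨le_of_lt haL, le_refl a⟩) hη.2
    linarith
  -- EL is negative at roots in [L₀-ρ, L₀]
  have hnegEL : ∀ x ∈ Ioo x₀ (x₀+δ), ∀ a ∈ Icc (L₀-ρ) L₀, E (x, a) = 0 → EL (x, a) < 0 := by
    intro x hx a ha hroot
    obtain ⟨hneg, -, -, -⟩ := hIprop x hx
    have haL : a < L₀ := by
      rcases eq_or_lt_of_le ha.2 with h | h
      · exfalso; rw [h] at hroot; linarith
      · exact h
    have hsubI : Icc a L₀ ⊆ Icc (L₀-ρ) (L₀+ρ) := by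
      apply Icc_subset_Icc <;> [linarith [ha.1]; linarith]
    obtain ⟨η, hη, hslope⟩ := exists_hasDerivAt_eq_slope (fun L => E (x, L))
      (fun L => EL (x, L)) haL ((hfxcont x hx).mono hsubI)
      (fun t ht => hL x t (hxV x hx t (hsubI (Ioo_subset_Icc_self ht))))
    have hη1 : EL (x, η) = (E (x, L₀) - E (x, a)) / (L₀ - a) := hslope
    have hηneg : EL (x, η) < 0 := by
      rw [hη1, hroot]
      apply div_neg_of_neg_of_pos <;> [linarith; linarith [hη.1, hη.2]]
    have := hELmono x hx (hsubI ⟨le_refl a, le_of_lt haL⟩)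
      (hsubI (Ioo_subset_Icc_self hη)) hη.1
    linarith
  -- uniqueness of roots in each half interval
  have hnotwo : ∀ x ∈ Ioo x₀ (x₀+δ), ∀ a ∈ Icc (L₀-ρ) (L₀+ρ), E (x, a) = 0 →
      ∀ b ∈ Icc (L₀-ρ) (L₀+ρ), E (x, b) = 0 → a < b → (a ∈ Icc L₀ (L₀+ρ) → False) ∧
        (b ∈ Icc (L₀-ρ) L₀ → False) := by
    intro x hx a ha hra b hb hrb hab
    have hsubI : Icc a b ⊆ Icc (L₀-ρ) (L₀+ρ) := Icc_subset_Icc ha.1 hb.2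
    obtain ⟨ξ, hξ, hslope⟩ := exists_hasDerivAt_eq_slope (fun L => E (x, L))
      (fun L => EL (x, L)) hab ((hfxcont x hx).mono hsubI)
      (fun t ht => hL x t (hxV x hx t (hsubI (Ioo_subset_Icc_self ht))))
    have hξ0 : EL (x, ξ) = 0 := by
      have : EL (x, ξ) = (E (x, b) - E (x, a)) / (b - a) := hslope
      rw [this, hra, hrb]; simp
    constructor
    · intro haR
      have h1 : 0 < EL (x, a) := hposEL x hx a haR hra
      have h2 := hELmono x hx ha (hsubI (Ioo_subset_Icc_self hξ)) hξ.1
      simp only [] at h2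
      linarith
    · intro hbL
      have h1 : EL (x, b) < 0 := hnegEL x hx b hbL hrb
      have h2 := hELmono x hx (hsubI (Ioo_subset_Icc_self hξ)) hb hξ.2
      simp only [] at h2
      linarith
  -- existence of roots
  have hexR : ∀ x ∈ Ioo x₀ (x₀+δ), ∃ L, L ∈ Ioo L₀ (L₀+ρ) ∧ E (x, L) = 0 := by
    intro x hx
    obtain ⟨hneg, hplus, -, -⟩ := hIprop x hx
    have hsubI : Icc L₀ (L₀+ρ) ⊆ Icc (L₀-ρ) (L₀+ρ) := Icc_subset_Icc (by linarith) le_rfl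
    have := intermediate_value_Ioo (a := L₀) (b := L₀+ρ) (by linarith)
      ((hfxcont x hx).mono hsubI)
    obtain ⟨L, hLmem, hLval⟩ := this (show (0:ℝ) ∈ Ioo (E (x, L₀)) (E (x, L₀+ρ)) from ⟨hneg, hplus⟩)
    exact ⟨L, hLmem, hLval⟩
  have hexL : ∀ x ∈ Ioo x₀ (x₀+δ), ∃ L, L ∈ Ioo (L₀-ρ) L₀ ∧ E (x, L) = 0 := by
    intro x hx
    obtain ⟨hneg, -, hminus, -⟩ := hIprop x hx
    have hsubI : Icc (L₀-ρ) L₀ ⊆ Icc (L₀-ρ) (L₀+ρ) := Icc_subset_Icc le_rfl (by linarith)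
    have := intermediate_value_Ioo' (a := L₀-ρ) (b := L₀) (by linarith)
      ((hfxcont x hx).mono hsubI)
    obtain ⟨L, hLmem, hLval⟩ := this (show (0:ℝ) ∈ Ioo (E (x, L₀)) (E (x, L₀-ρ)) from ⟨hneg, hminus⟩)
    exact ⟨L, hLmem, hLval⟩
  -- definition of the root branches
  set Lp : ℝ → ℝ := fun x =>
    if h : ∃ L, L ∈ Ioo L₀ (L₀+ρ) ∧ E (x, L) = 0 then h.choose else L₀ with hLpdef
  set Lm : ℝ → ℝ := fun x =>
    if h : ∃ L, L ∈ Ioo (L₀-ρ) L₀ ∧ E (x, L) = 0 then h.choose else L₀ with hLmdef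
  have hLpP : ∀ x ∈ Ioo x₀ (x₀+δ), Lp x ∈ Ioo L₀ (L₀+ρ) ∧ E (x, Lp x) = 0 := by
    intro x hx
    have h := hexR x hx
    simp only [hLpdef, dif_pos h]
    exact h.choose_spec
  have hLmP : ∀ x ∈ Ioo x₀ (x₀+δ), Lm x ∈ Ioo (L₀-ρ) L₀ ∧ E (x, Lm x) = 0 := by
    intro x hx
    have h := hexL x hx
    simp only [hLmdef, dif_pos h]
    exact h.choose_spec
  -- uniqueness: any root in the upper (resp. lower) closed half equals Lp (resp. Lm)
  have huniqR : ∀ x ∈ Ioo x₀ (x₀+δ), ∀ a ∈ Icc L₀ (L₀+ρ), E (x, a) = 0 → a = Lp x := by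
    intro x hx a ha hra
    obtain ⟨hpm, hpr⟩ := hLpP x hx
    have hamem : a ∈ Icc (L₀-ρ) (L₀+ρ) := ⟨by linarith [ha.1], ha.2⟩
    have hpmem : Lp x ∈ Icc (L₀-ρ) (L₀+ρ) := ⟨by linarith [hpm.1], le_of_lt hpm.2⟩
    rcases lt_trichotomy a (Lp x) with h | h | h
    · exact absurd ha ((hnotwo x hx a hamem hra _ hpmem hpr h).1 ∘ fun H => H)
    · exact h
    · exact absurd (⟨le_of_lt hpm.1, le_of_lt hpm.2⟩ : Lp x ∈ Icc L₀ (L₀+ρ))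
        ((hnotwo x hx _ hpmem hpr a hamem hra h).1 ∘ fun H => H)
  have huniqL : ∀ x ∈ Ioo x₀ (x₀+δ), ∀ a ∈ Icc (L₀-ρ) L₀, E (x, a) = 0 → a = Lm x := by
    intro x hx a ha hra
    obtain ⟨hmm, hmr⟩ := hLmP x hx
    have hamem : a ∈ Icc (L₀-ρ) (L₀+ρ) := ⟨ha.1, by linarith [ha.2]⟩
    have hmmem : Lm x ∈ Icc (L₀-ρ) (L₀+ρ) := ⟨le_of_lt hmm.1, by linarith [hmm.2]⟩
    rcases lt_trichotomy a (Lm x) with h | h | h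
    · exact absurd (⟨le_of_lt hmm.1, le_of_lt hmm.2⟩ : Lm x ∈ Icc (L₀-ρ) L₀)
        ((hnotwo x hx a hamem hra _ hmmem hmr h).2 ∘ fun H => H)
    · exact h
    · exact absurd ha ((hnotwo x hx _ hmmem hmr a hamem hra h).2 ∘ fun H => H)
  -- root set description
  have hrootset : ∀ x ∈ Ioo x₀ (x₀+δ),
      {L ∈ Ioo (L₀ - ρ) (L₀ + ρ) | E (x, L) = 0} = {Lm x, Lp x} := by
    intro x hx
    obtain ⟨hpm, hpr⟩ := hLpP x hx
    obtain ⟨hmm, hmr⟩ := hLmP x hx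
    ext L
    simp only [mem_setOf_eq, mem_insert_iff, mem_singleton_iff]
    constructor
    · rintro ⟨hLmem, hLroot⟩
      rcases le_total L₀ L with h | h
      · right; exact huniqR x hx L ⟨h, le_of_lt hLmem.2⟩ hLroot
      · left; exact huniqL x hx L ⟨le_of_lt hLmem.1, h⟩ hLroot
    · rintro (rfl | rfl)
      · exact ⟨⟨hmm.1, by linarith [hmm.2]⟩, hmr⟩
      · exact ⟨⟨by linarith [hpm.1], hpm.2⟩, hpr⟩
  -- convergence of the branches to L₀
  have hImem : Ioo x₀ (x₀+δ) ∈ 𝓝[>] x₀ := Ioo_mem_nhdsGT (by linarith)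
  have hLptend : Tendsto Lp (𝓝[>] x₀) (𝓝 L₀) := by
    rw [tendsto_order]
    constructor
    · intro b hb
      filter_upwards [hImem] with x hx
      have := (hLpP x hx).1.1
      linarith
    · intro b hb
      rcases le_or_gt (L₀ + ρ) b with hcase | hcase
      · filter_upwards [hImem] with x hx
        have := (hLpP x hx).1.2
        linarith
      · have hb0 : 0 < E (x₀, b) := hEplus' b hb (le_of_lt hcase)
        have hcont : ContinuousAt (fun x => E (x, b)) x₀ := by
          have h5 : ContinuousAt E (x₀, b) :=
            hEcont.continuousAt (hVopen.mem_nhds (hrV (hrect0 _ ⟨by linarith, by linarith⟩)))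
          exact h5.tendsto.comp ((continuous_id.prodMk continuous_const).tendsto x₀)
        have hev : ∀ᶠ x in 𝓝[>] x₀, 0 < E (x, b) :=
          eventually_nhdsWithin_of_eventually_nhds (hcont.eventually_const_lt hb0)
        filter_upwards [hImem, hev] with x hx hxb
        obtain ⟨hneg, -, -, -⟩ := hIprop x hx
        have hsubI : Icc L₀ b ⊆ Icc (L₀-ρ) (L₀+ρ) := Icc_subset_Icc (by linarith) (by linarith)
        obtain ⟨L, hLmem, hLval⟩ := intermediate_value_Ioo (a := L₀) (b := b) (le_of_lt hb)
          ((hfxcont x hx).mono hsubI) (show (0:ℝ) ∈ Ioo (E (x, L₀)) (E (x, b)) from ⟨hneg, hxb⟩)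
        have heq : L = Lp x := huniqR x hx L ⟨le_of_lt hLmem.1, by linarith [hLmem.2]⟩ hLval
        rw [← heq]
        exact hLmem.2
  have hLmtend : Tendsto Lm (𝓝[>] x₀) (𝓝 L₀) := by
    rw [tendsto_order]
    constructor
    · intro b hb
      rcases le_or_gt b (L₀ - ρ) with hcase | hcase
      · filter_upwards [hImem] with x hx
        have := (hLmP x hx).1.1
        linarith
      · have hb0 : 0 < E (x₀, b) := hEminus' b (le_of_lt hcase) hb
        have hcont : ContinuousAt (fun x => E (x, b)) x₀ := by
          have h5 : ContinuousAt E (x₀, b) :=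
            hEcont.continuousAt (hVopen.mem_nhds (hrV (hrect0 _ ⟨by linarith, by linarith⟩)))
          exact h5.tendsto.comp ((continuous_id.prodMk continuous_const).tendsto x₀)
        have hev : ∀ᶠ x in 𝓝[>] x₀, 0 < E (x, b) :=
          eventually_nhdsWithin_of_eventually_nhds (hcont.eventually_const_lt hb0)
        filter_upwards [hImem, hev] with x hx hxb
        obtain ⟨hneg, -, -, -⟩ := hIprop x hx
        have hsubI : Icc b L₀ ⊆ Icc (L₀-ρ) (L₀+ρ) := Icc_subset_Icc (by linarith) (by linarith)
        obtain ⟨L, hLmem, hLval⟩ := intermediate_value_Ioo' (a := b) (b := L₀) (le_of_lt hb)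
          ((hfxcont x hx).mono hsubI) (show (0:ℝ) ∈ Ioo (E (x, L₀)) (E (x, b)) from ⟨hneg, hxb⟩)
        have heq : L = Lm x := huniqL x hx L ⟨by linarith [hLmem.1], le_of_lt hLmem.2⟩ hLval
        rw [← heq]
        exact hLmem.1
    · intro b hb
      filter_upwards [hImem] with x hx
      have := (hLmP x hx).1.2
      linarith
  have hLppair : Tendsto (fun x => (x, Lp x)) (𝓝[>] x₀) (𝓝 (x₀, L₀)) :=
    ((tendsto_id.mono_left nhdsWithin_le_nhds).prodMk_nhds hLptend)
  have hLmpair : Tendsto (fun x => (x, Lm x)) (𝓝[>] x₀) (𝓝 (x₀, L₀)) :=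
    ((tendsto_id.mono_left nhdsWithin_le_nhds).prodMk_nhds hLmtend)
  -- smoothness of the branches via the inverse function theorem
  have hsmooth : ∀ (lo hi : ℝ) (W : ℝ → ℝ), Ioo lo hi ⊆ Icc (L₀-ρ) (L₀+ρ) →
      (∀ x ∈ Ioo x₀ (x₀+δ), W x ∈ Ioo lo hi ∧ E (x, W x) = 0) →
      (∀ x ∈ Ioo x₀ (x₀+δ), ∀ L' ∈ Ioo lo hi, E (x, L') = 0 → L' = W x) →
      ∀ x₁ ∈ Ioo x₀ (x₀+δ), EL (x₁, W x₁) ≠ 0 → ContDiffAt ℝ 1 W x₁ := by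
    intro lo hi W hsub hWP huniq x₁ hx₁ hELnz
    have hp₁V : (x₁, W x₁) ∈ V := hxV x₁ hx₁ _ (hsub (hWP x₁ hx₁).1)
    set Φ : ℝ × ℝ → ℝ × ℝ := fun p => (p.1, E p) with hΦdef
    have hΦC : ContDiffAt ℝ 2 Φ (x₁, W x₁) :=
      (contDiff_fst.contDiffAt).prodMk (hEV.contDiffAt (hVopen.mem_nhds hp₁V))
    set T : ℝ × ℝ →L[ℝ] ℝ × ℝ :=
      (ContinuousLinearMap.fst ℝ ℝ ℝ).prod (F (x₁, W x₁)) with hTdef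
    have hTD : HasFDerivAt Φ T (x₁, W x₁) := (hasFDerivAt_fst).prodMk (hfd _ hp₁V)
    have hTinj : Function.Injective T := by
      intro u v huv
      have h12 := Prod.ext_iff.1 huv
      simp only [hTdef, ContinuousLinearMap.prod_apply, ContinuousLinearMap.coe_fst'] at h12
      obtain ⟨h1, h2⟩ := h12
      rw [clm_apply_eq (F (x₁, W x₁)) u, clm_apply_eq (F (x₁, W x₁)) v, h1] at h2
      have h3 : u.2 * EL (x₁, W x₁) = v.2 * EL (x₁, W x₁) := by
        simp only [hELdef]; linarith
      exact Prod.ext_iff.2 ⟨h1, mul_right_cancel₀ hELnz h3⟩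
    have hTsurj : Function.Surjective T :=
      (LinearMap.injective_iff_surjective (f := (T : (ℝ×ℝ) →ₗ[ℝ] (ℝ×ℝ)))).1 hTinj
    set e : (ℝ × ℝ) ≃L[ℝ] (ℝ × ℝ) :=
      (LinearEquiv.ofBijective (T : (ℝ×ℝ) →ₗ[ℝ] (ℝ×ℝ)) ⟨hTinj, hTsurj⟩).toContinuousLinearEquiv
      with hedef
    have hecoe : (e : ℝ × ℝ →L[ℝ] ℝ × ℝ) = T := by
      apply ContinuousLinearMap.ext
      intro u
      rfl
    have hTD' : HasFDerivAt Φ (e : ℝ × ℝ →L[ℝ] ℝ × ℝ) (x₁, W x₁) := by rw [hecoe]; exact hTD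
    have h21 : (2 : WithTop ℕ∞) ≠ 0 := by norm_num
    have hstrict : HasStrictFDerivAt Φ (e : ℝ × ℝ →L[ℝ] ℝ × ℝ) (x₁, W x₁) :=
      hΦC.hasStrictFDerivAt' hTD' h21
    set Ψ : ℝ × ℝ → ℝ × ℝ := hstrict.localInverse Φ e (x₁, W x₁) with hΨdef
    have hΦp : Φ (x₁, W x₁) = (x₁, 0) := by
      simp only [hΦdef, (hWP x₁ hx₁).2]
    have hΨC : ContDiffAt ℝ 2 Ψ (x₁, 0) := by
      rw [← hΦp]; exact hΦC.to_localInverse hTD' h21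
    have hΨcont : ContinuousAt Ψ (x₁, 0) := by
      rw [← hΦp]; exact hstrict.localInverse_continuousAt
    have hrinv : ∀ᶠ y in 𝓝 ((x₁ : ℝ), (0:ℝ)), Φ (Ψ y) = y := by
      rw [← hΦp]; exact hstrict.eventually_right_inverse
    have hΨp : Ψ (x₁, 0) = (x₁, W x₁) := by
      rw [← hΦp]; exact hstrict.localInverse_apply_image
    have hinner : ContDiffAt ℝ 2 (fun x : ℝ => ((x, (0:ℝ)) : ℝ × ℝ)) x₁ :=
      (contDiff_id.prodMk contDiff_const).contDiffAt
    have hinnerc : ContinuousAt (fun x : ℝ => ((x, (0:ℝ)) : ℝ × ℝ)) x₁ :=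
      (continuous_id.prodMk continuous_const).continuousAt
    have hGC : ContDiffAt ℝ 1 (fun x => (Ψ (x, 0)).2) x₁ :=
      ((hΨC.comp x₁ hinner).snd).of_le (by norm_num)
    have htend : Tendsto (fun x : ℝ => Ψ (x, 0)) (𝓝 x₁) (𝓝 (x₁, W x₁)) := by
      rw [← hΨp]
      exact hΨcont.tendsto.comp hinnerc
    have hopen2 : IsOpen (Ioo x₀ (x₀+δ) ×ˢ Ioo lo hi) := isOpen_Ioo.prod isOpen_Ioo
    have hmem2 : (x₁, W x₁) ∈ Ioo x₀ (x₀+δ) ×ˢ Ioo lo hi := ⟨hx₁, (hWP x₁ hx₁).1⟩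
    have hev2 : ∀ᶠ x in 𝓝 x₁, Ψ (x, 0) ∈ Ioo x₀ (x₀+δ) ×ˢ Ioo lo hi :=
      htend (hopen2.mem_nhds hmem2)
    have hev3 : ∀ᶠ x in 𝓝 x₁, Φ (Ψ (x, 0)) = (x, 0) := hinnerc.tendsto.eventually hrinv
    have hev : W =ᶠ[𝓝 x₁] fun x => (Ψ (x, 0)).2 := by
      filter_upwards [hev2, hev3] with x h2 h3
      have hfst : (Ψ (x, 0)).1 = x := congrArg Prod.fst h3
      have hsnd : E (Ψ (x, 0)) = 0 := congrArg Prod.snd h3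
      have hx' : x ∈ Ioo x₀ (x₀+δ) := by rw [← hfst]; exact h2.1
      have h4 : (Ψ (x, 0)).2 = W x := by
        apply huniq x hx' _ h2.2
        have h5 : ((x : ℝ), (Ψ (x,0)).2) = Ψ (x, 0) := Prod.ext_iff.2 ⟨hfst.symm, rfl⟩
        rw [h5]
        exact hsnd
      exact h4.symm
    exact hGC.congr_of_eventuallyEq hev
  have hLpC : ∀ x₁ ∈ Ioo x₀ (x₀+δ), ContDiffAt ℝ 1 Lp x₁ := by
    intro x₁ hx₁
    refine hsmooth L₀ (L₀+ρ) Lp (fun t ht => ⟨by linarith [ht.1], le_of_lt ht.2⟩) hLpP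
      (fun x hx L' hL' hroot => huniqR x hx L' ⟨le_of_lt hL'.1, le_of_lt hL'.2⟩ hroot) x₁ hx₁ ?_
    exact ne_of_gt (hposEL x₁ hx₁ _
      ⟨le_of_lt (hLpP x₁ hx₁).1.1, le_of_lt (hLpP x₁ hx₁).1.2⟩ (hLpP x₁ hx₁).2)
  have hLmC : ∀ x₁ ∈ Ioo x₀ (x₀+δ), ContDiffAt ℝ 1 Lm x₁ := by
    intro x₁ hx₁
    refine hsmooth (L₀-ρ) L₀ Lm (fun t ht => ⟨le_of_lt ht.1, by linarith [ht.2]⟩) hLmP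
      (fun x hx L' hL' hroot => huniqL x hx L' ⟨le_of_lt hL'.1, le_of_lt hL'.2⟩ hroot) x₁ hx₁ ?_
    exact ne_of_lt (hnegEL x₁ hx₁ _
      ⟨le_of_lt (hLmP x₁ hx₁).1.1, le_of_lt (hLmP x₁ hx₁).1.2⟩ (hLmP x₁ hx₁).2)
  -- derivative formula
  have hderiv : ∀ (W : ℝ → ℝ), (∀ x ∈ Ioo x₀ (x₀+δ), E (x, W x) = 0) →
      (∀ x ∈ Ioo x₀ (x₀+δ), ContDiffAt ℝ 1 W x) →
      ∀ x ∈ Ioo x₀ (x₀+δ), (x, W x) ∈ V → EL (x, W x) ≠ 0 →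
      deriv W x = -Ex (x, W x) / EL (x, W x) := by
    intro W hroot hWC x hx hV' hnz
    have hW : HasDerivAt W (deriv W x) x :=
      (((hWC x hx).differentiableAt one_ne_zero)).hasDerivAt
    have hcurve : HasDerivAt (fun x => ((x : ℝ), W x)) (1, deriv W x) x :=
      (hasDerivAt_id x).prodMk hW
    have hcomp : HasDerivAt (fun x => E (x, W x)) (F (x, W x) (1, deriv W x)) x :=
      (hfd _ hV').comp_hasDerivAt x hcurve
    have hev0 : (fun x => E (x, W x)) =ᶠ[𝓝 x] fun _ => 0 := by
      filter_upwards [isOpen_Ioo.mem_nhds hx] with y hy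
      exact hroot y hy
    have h6 : F (x, W x) (1, deriv W x) = 0 := by
      rw [← hcomp.deriv, hev0.deriv_eq]
      simp
    rw [clm_apply_eq] at h6
    simp only [] at h6
    rw [eq_div_iff hnz]
    simp only [hELdef, hExdef]
    linarith
  have hLpIcc : ∀ x ∈ Ioo x₀ (x₀+δ), Lp x ∈ Icc (L₀-ρ) (L₀+ρ) :=
    fun x hx => ⟨by linarith [(hLpP x hx).1.1], le_of_lt (hLpP x hx).1.2⟩
  have hLpIccR : ∀ x ∈ Ioo x₀ (x₀+δ), Lp x ∈ Icc L₀ (L₀+ρ) :=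
    fun x hx => ⟨le_of_lt (hLpP x hx).1.1, le_of_lt (hLpP x hx).1.2⟩
  have hLmIcc : ∀ x ∈ Ioo x₀ (x₀+δ), Lm x ∈ Icc (L₀-ρ) (L₀+ρ) :=
    fun x hx => ⟨le_of_lt (hLmP x hx).1.1, by linarith [(hLmP x hx).1.2]⟩
  have hLmIccL : ∀ x ∈ Ioo x₀ (x₀+δ), Lm x ∈ Icc (L₀-ρ) L₀ :=
    fun x hx => ⟨le_of_lt (hLmP x hx).1.1, le_of_lt (hLmP x hx).1.2⟩
  have hELpos : ∀ x ∈ Ioo x₀ (x₀+δ), 0 < EL (x, Lp x) :=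
    fun x hx => hposEL x hx _ (hLpIccR x hx) (hLpP x hx).2
  have hELneg : ∀ x ∈ Ioo x₀ (x₀+δ), EL (x, Lm x) < 0 :=
    fun x hx => hnegEL x hx _ (hLmIccL x hx) (hLmP x hx).2
  have hderivLp : ∀ x ∈ Ioo x₀ (x₀+δ), deriv Lp x = -Ex (x, Lp x) / EL (x, Lp x) := by
    intro x hx
    exact hderiv Lp (fun y hy => (hLpP y hy).2) hLpC x hx
      (hxV x hx _ (hLpIcc x hx)) (ne_of_gt (hELpos x hx))
  have hderivLm : ∀ x ∈ Ioo x₀ (x₀+δ), deriv Lm x = -Ex (x, Lm x) / EL (x, Lm x) := by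
    intro x hx
    exact hderiv Lm (fun y hy => (hLmP y hy).2) hLmC x hx
      (hxV x hx _ (hLmIcc x hx)) (ne_of_lt (hELneg x hx))
  -- blow-up of the derivatives
  have hExtendP : Tendsto (fun x => -Ex (x, Lp x)) (𝓝[>] x₀) (𝓝 A) := by
    have h1 : Tendsto (fun x => Ex (x, Lp x)) (𝓝[>] x₀) (𝓝 (Ex (x₀, L₀))) :=
      ((hExcont.continuousAt (hVopen.mem_nhds hV0)).tendsto).comp hLppair
    rw [hExA] at h1
    simpa using h1.neg
  have hExtendM : Tendsto (fun x => -Ex (x, Lm x)) (𝓝[>] x₀) (𝓝 A) := by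
    have h1 : Tendsto (fun x => Ex (x, Lm x)) (𝓝[>] x₀) (𝓝 (Ex (x₀, L₀))) :=
      ((hExcont.continuousAt (hVopen.mem_nhds hV0)).tendsto).comp hLmpair
    rw [hExA] at h1
    simpa using h1.neg
  have hELtendP : Tendsto (fun x => EL (x, Lp x)) (𝓝[>] x₀) (𝓝 0) := by
    have h1 : Tendsto (fun x => EL (x, Lp x)) (𝓝[>] x₀) (𝓝 (EL (x₀, L₀))) :=
      ((hELcont.continuousAt (hVopen.mem_nhds hV0)).tendsto).comp hLppair
    rwa [hEL0] at h1
  have hELtendM : Tendsto (fun x => EL (x, Lm x)) (𝓝[>] x₀) (𝓝 0) := by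
    have h1 : Tendsto (fun x => EL (x, Lm x)) (𝓝[>] x₀) (𝓝 (EL (x₀, L₀))) :=
      ((hELcont.continuousAt (hVopen.mem_nhds hV0)).tendsto).comp hLmpair
    rwa [hEL0] at h1
  have hderivPtop : Tendsto (deriv Lp) (𝓝[>] x₀) atTop := by
    have hden : Tendsto (fun x => EL (x, Lp x)) (𝓝[>] x₀) (𝓝[>] 0) := by
      rw [tendsto_nhdsWithin_iff]
      refine ⟨hELtendP, ?_⟩
      filter_upwards [hImem] with x hx
      exact hELpos x hx
    have hinv : Tendsto (fun x => (EL (x, Lp x))⁻¹) (𝓝[>] x₀) atTop :=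
      tendsto_inv_nhdsGT_zero.comp hden
    have hmul : Tendsto (fun x => -Ex (x, Lp x) * (EL (x, Lp x))⁻¹) (𝓝[>] x₀) atTop :=
      hExtendP.pos_mul_atTop hApos hinv
    apply hmul.congr'
    filter_upwards [hImem] with x hx
    rw [hderivLp x hx, div_eq_mul_inv]
  have hderivMbot : Tendsto (deriv Lm) (𝓝[>] x₀) atBot := by
    have hden : Tendsto (fun x => -EL (x, Lm x)) (𝓝[>] x₀) (𝓝[>] 0) := by
      rw [tendsto_nhdsWithin_iff]
      constructor
      · simpa using hELtendM.neg
      · filter_upwards [hImem] with x hx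
        simpa using hELneg x hx
    have hinv : Tendsto (fun x => (-EL (x, Lm x))⁻¹) (𝓝[>] x₀) atTop :=
      tendsto_inv_nhdsGT_zero.comp hden
    have hinv2 : Tendsto (fun x => (EL (x, Lm x))⁻¹) (𝓝[>] x₀) atBot := by
      have hneg : Tendsto (fun y : ℝ => -y) atTop atBot := tendsto_neg_atTop_atBot
      have := hneg.comp hinv
      apply this.congr
      intro x
      show -(-EL (x, Lm x))⁻¹ = (EL (x, Lm x))⁻¹
      rw [inv_neg, neg_neg]
    have hmul : Tendsto (fun x => -Ex (x, Lm x) * (EL (x, Lm x))⁻¹) (𝓝[>] x₀) atBot :=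
      hExtendM.pos_mul_atBot hApos hinv2
    apply hmul.congr'
    filter_upwards [hImem] with x hx
    rw [hderivLm x hx, div_eq_mul_inv]
  -- asymptotics of the separation
  set EXL : ℝ := fderiv ℝ EL (x₀, L₀) (1, 0) with hEXLdef
  set DP : ℝ → ℝ := fun x => -E (x, L₀) - EL (x, L₀) * (Lp x - L₀) with hDPdef
  set DM : ℝ → ℝ := fun x => -E (x, L₀) + EL (x, L₀) * (L₀ - Lm x) with hDMdef
  have hEs : Tendsto (fun x => -E (x, L₀) / (x - x₀)) (𝓝[>] x₀) (𝓝 A) := by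
    have h1 := hslopeE.neg
    rw [show -(-A) = A by ring] at h1
    apply h1.congr'
    filter_upwards [eventually_mem_nhdsWithin] with x hx
    rw [slope_def_field]
    rw [h0]
    ring
  have hELs : Tendsto (fun x => EL (x, L₀) / (x - x₀)) (𝓝[>] x₀) (𝓝 EXL) := by
    have h1 : Tendsto (slope (fun x => EL (x, L₀)) x₀) (𝓝[>] x₀) (𝓝 EXL) :=
      (hasDerivAt_iff_tendsto_slope.1 hXL0).mono_left
        (nhdsWithin_mono _ (fun y hy => ne_of_gt hy))
    apply h1.congr'
    filter_upwards [] with x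
    rw [slope_def_field, hEL0, sub_zero]
  have hLpsub0 : Tendsto (fun x => Lp x - L₀) (𝓝[>] x₀) (𝓝 0) := by
    have h1 := hLptend.sub (tendsto_const_nhds (x := L₀))
    simpa using h1
  have hLmsub0 : Tendsto (fun x => L₀ - Lm x) (𝓝[>] x₀) (𝓝 0) := by
    simpa using (tendsto_const_nhds (x := L₀)).sub hLmtend
  have hDtendP : Tendsto (fun x => DP x / (x - x₀)) (𝓝[>] x₀) (𝓝 A) := by
    have h1 := hEs.sub (hELs.mul hLpsub0)
    rw [show A - EXL * 0 = A by ring] at h1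
    apply h1.congr'
    filter_upwards [eventually_mem_nhdsWithin] with x hx
    show -E (x, L₀) / (x - x₀) - EL (x, L₀) / (x - x₀) * (Lp x - L₀) = DP x / (x - x₀)
    rw [hDPdef]
    rw [sub_div, div_mul_eq_mul_div]
  have hDtendM : Tendsto (fun x => DM x / (x - x₀)) (𝓝[>] x₀) (𝓝 A) := by
    have h1 := hEs.add (hELs.mul hLmsub0)
    rw [show A + EXL * 0 = A by ring] at h1
    apply h1.congr'
    filter_upwards [eventually_mem_nhdsWithin] with x hx
    show -E (x, L₀) / (x - x₀) + EL (x, L₀) / (x - x₀) * (L₀ - Lm x) = DM x / (x - x₀)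
    rw [hDMdef]
    rw [add_div, div_mul_eq_mul_div]
  -- Taylor estimates along the branches
  have hTaylorP : ∀ ε : ℝ, 0 < ε → ∀ᶠ x in 𝓝[>] x₀,
      (c-ε)/2 * (Lp x - L₀)^2 ≤ DP x ∧ DP x ≤ (c+ε)/2 * (Lp x - L₀)^2 := by
    intro ε hε
    obtain ⟨r', hr'pos, -, hr'ELL⟩ := hrect ε hε
    have hev1 : Ioo x₀ (x₀ + min r' r) ∈ 𝓝[>] x₀ :=
      Ioo_mem_nhdsGT (by linarith [lt_min hr'pos hrpos])
    have hev2 : ∀ᶠ x in 𝓝[>] x₀, Lp x < L₀ + min r' r :=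
      (tendsto_order.1 hLptend).2 _ (by linarith [lt_min hr'pos hrpos])
    filter_upwards [hImem, hev1, hev2] with x hx hxr hxp
    have hvpos : L₀ < Lp x := (hLpP x hx).1.1
    have hroot : E (x, Lp x) = 0 := (hLpP x hx).2
    have hseg : ∀ t ∈ Icc L₀ (Lp x),
        (x, t) ∈ Icc (x₀-r') (x₀+r') ×ˢ Icc (L₀-r') (L₀+r') := by
      intro t ht
      refine ⟨⟨?_, ?_⟩, ⟨?_, ?_⟩⟩
      · linarith [hxr.1]
      · linarith [hxr.2, min_le_left r' r]
      · linarith [ht.1]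
      · linarith [ht.2, hxp, min_le_left r' r]
    have hsegV : ∀ t ∈ Icc L₀ (Lp x), (x, t) ∈ V := by
      intro t ht
      exact hxV x hx t ⟨by linarith [ht.1], by linarith [ht.2, (hLpP x hx).1.2]⟩
    have hT1 := taylor2_lower_left (f := fun L => E (x, L)) (f' := fun L => EL (x, L))
      (g := fun L => ELL (x, L)) (a := L₀) (b := Lp x) (m := c - ε) (le_of_lt hvpos)
      (fun t ht => hL x t (hsegV t ht)) (fun t ht => hLL x t (hsegV t ht))
      (fun t ht => by linarith [(abs_lt.1 (hr'ELL _ (hseg t ht))).1])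
    have hT2 := taylor2_upper_left (f := fun L => E (x, L)) (f' := fun L => EL (x, L))
      (g := fun L => ELL (x, L)) (a := L₀) (b := Lp x) (M := c + ε) (le_of_lt hvpos)
      (fun t ht => hL x t (hsegV t ht)) (fun t ht => hLL x t (hsegV t ht))
      (fun t ht => by linarith [(abs_lt.1 (hr'ELL _ (hseg t ht))).2])
    rw [hroot] at hT1 hT2
    constructor
    · calc (c-ε)/2 * (Lp x - L₀)^2 ≤ 0 - E (x, L₀) - EL (x, L₀) * (Lp x - L₀) := hT1
        _ = DP x := by rw [hDPdef]; ring
    · calc DP x = 0 - E (x, L₀) - EL (x, L₀) * (Lp x - L₀) := by rw [hDPdef]; ring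
        _ ≤ (c+ε)/2 * (Lp x - L₀)^2 := hT2
  have hTaylorM : ∀ ε : ℝ, 0 < ε → ∀ᶠ x in 𝓝[>] x₀,
      (c-ε)/2 * (L₀ - Lm x)^2 ≤ DM x ∧ DM x ≤ (c+ε)/2 * (L₀ - Lm x)^2 := by
    intro ε hε
    obtain ⟨r', hr'pos, -, hr'ELL⟩ := hrect ε hε
    have hev1 : Ioo x₀ (x₀ + min r' r) ∈ 𝓝[>] x₀ :=
      Ioo_mem_nhdsGT (by linarith [lt_min hr'pos hrpos])
    have hev2 : ∀ᶠ x in 𝓝[>] x₀, L₀ - min r' r < Lm x :=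
      (tendsto_order.1 hLmtend).1 _ (by linarith [lt_min hr'pos hrpos])
    filter_upwards [hImem, hev1, hev2] with x hx hxr hxm
    have hvpos : Lm x < L₀ := (hLmP x hx).1.2
    have hroot : E (x, Lm x) = 0 := (hLmP x hx).2
    have hseg : ∀ t ∈ Icc (Lm x) L₀,
        (x, t) ∈ Icc (x₀-r') (x₀+r') ×ˢ Icc (L₀-r') (L₀+r') := by
      intro t ht
      refine ⟨⟨?_, ?_⟩, ⟨?_, ?_⟩⟩
      · linarith [hxr.1]
      · linarith [hxr.2, min_le_left r' r]
      · linarith [ht.1, hxm, min_le_left r' r]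
      · linarith [ht.2]
    have hsegV : ∀ t ∈ Icc (Lm x) L₀, (x, t) ∈ V := by
      intro t ht
      exact hxV x hx t ⟨by linarith [ht.1, (hLmP x hx).1.1], by linarith [ht.2]⟩
    have hT1 := taylor2_lower_right (f := fun L => E (x, L)) (f' := fun L => EL (x, L))
      (g := fun L => ELL (x, L)) (a := Lm x) (b := L₀) (m := c - ε) (le_of_lt hvpos)
      (fun t ht => hL x t (hsegV t ht)) (fun t ht => hLL x t (hsegV t ht))
      (fun t ht => by linarith [(abs_lt.1 (hr'ELL _ (hseg t ht))).1])
    have hT2 := taylor2_upper_right (f := fun L => E (x, L)) (f' := fun L => EL (x, L))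
      (g := fun L => ELL (x, L)) (a := Lm x) (b := L₀) (M := c + ε) (le_of_lt hvpos)
      (fun t ht => hL x t (hsegV t ht)) (fun t ht => hLL x t (hsegV t ht))
      (fun t ht => by linarith [(abs_lt.1 (hr'ELL _ (hseg t ht))).2])
    rw [hroot] at hT1 hT2
    constructor
    · calc (c-ε)/2 * (L₀ - Lm x)^2 ≤ 0 - E (x, L₀) + EL (x, L₀) * (L₀ - Lm x) := hT1
        _ = DM x := by rw [hDMdef]; ring
    · calc DM x = 0 - E (x, L₀) + EL (x, L₀) * (L₀ - Lm x) := by rw [hDMdef]; ring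
        _ ≤ (c+ε)/2 * (L₀ - Lm x)^2 := hT2
  -- second-order quotients
  have hquotP : Tendsto (fun x => DP x / (Lp x - L₀)^2) (𝓝[>] x₀) (𝓝 (c/2)) := by
    rw [Metric.tendsto_nhds]
    intro ε hε
    filter_upwards [hTaylorP ε hε, hImem] with x hT hx
    have hv2 : 0 < (Lp x - L₀)^2 := pow_pos (sub_pos.2 (hLpP x hx).1.1) 2
    have h1 : (c-ε)/2 ≤ DP x / (Lp x - L₀)^2 := (le_div_iff₀ hv2).2 (by linarith [hT.1])
    have h2 : DP x / (Lp x - L₀)^2 ≤ (c+ε)/2 := (div_le_iff₀ hv2).2 (by linarith [hT.2])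
    rw [Real.dist_eq, abs_lt]
    constructor <;> linarith
  have hquotM : Tendsto (fun x => DM x / (L₀ - Lm x)^2) (𝓝[>] x₀) (𝓝 (c/2)) := by
    rw [Metric.tendsto_nhds]
    intro ε hε
    filter_upwards [hTaylorM ε hε, hImem] with x hT hx
    have hv2 : 0 < (L₀ - Lm x)^2 := pow_pos (sub_pos.2 (hLmP x hx).1.2) 2
    have h1 : (c-ε)/2 ≤ DM x / (L₀ - Lm x)^2 := (le_div_iff₀ hv2).2 (by linarith [hT.1])
    have h2 : DM x / (L₀ - Lm x)^2 ≤ (c+ε)/2 := (div_le_iff₀ hv2).2 (by linarith [hT.2])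
    rw [Real.dist_eq, abs_lt]
    constructor <;> linarith
  -- limits of squared normalized separations
  have hqP : Tendsto (fun x => (Lp x - L₀)^2 / (x - x₀)) (𝓝[>] x₀) (𝓝 (2*A/c)) := by
    have h1 := hDtendP.div hquotP (by positivity : (c:ℝ)/2 ≠ 0)
    rw [show A / (c/2) = 2*A/c by field_simp] at h1
    apply h1.congr'
    filter_upwards [hTaylorP (c/2) (half_pos hcpos), hImem] with x hT hx
    have hv2 : 0 < (Lp x - L₀)^2 := pow_pos (sub_pos.2 (hLpP x hx).1.1) 2
    have hDpos : 0 < DP x := by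
      have h9 : 0 < (c - c/2)/2 * (Lp x - L₀)^2 := mul_pos (by linarith) hv2
      exact lt_of_lt_of_le h9 hT.1
    have hs : x - x₀ ≠ 0 := sub_ne_zero.2 (ne_of_gt hx.1)
    rw [Pi.div_apply]
    field_simp
  have hqM : Tendsto (fun x => (L₀ - Lm x)^2 / (x - x₀)) (𝓝[>] x₀) (𝓝 (2*A/c)) := by
    have h1 := hDtendM.div hquotM (by positivity : (c:ℝ)/2 ≠ 0)
    rw [show A / (c/2) = 2*A/c by field_simp] at h1
    apply h1.congr'
    filter_upwards [hTaylorM (c/2) (half_pos hcpos), hImem] with x hT hx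
    have hv2 : 0 < (L₀ - Lm x)^2 := pow_pos (sub_pos.2 (hLmP x hx).1.2) 2
    have hDpos : 0 < DM x := by
      have h9 : 0 < (c - c/2)/2 * (L₀ - Lm x)^2 := mul_pos (by linarith) hv2
      exact lt_of_lt_of_le h9 hT.1
    have hs : x - x₀ ≠ 0 := sub_ne_zero.2 (ne_of_gt hx.1)
    rw [Pi.div_apply]
    field_simp
  -- limits of the normalized separations
  have huPt : Tendsto (fun x => (Lp x - L₀) / Real.sqrt (x - x₀)) (𝓝[>] x₀)
      (𝓝 (Real.sqrt (2*A/c))) := by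
    have h1 := (Real.continuous_sqrt.tendsto _).comp hqP
    apply h1.congr'
    filter_upwards [hImem] with x hx
    show Real.sqrt ((Lp x - L₀)^2 / (x - x₀)) = (Lp x - L₀) / Real.sqrt (x - x₀)
    rw [Real.sqrt_div (sq_nonneg _), Real.sqrt_sq (by linarith [(hLpP x hx).1.1] : (0:ℝ) ≤ Lp x - L₀)]
  have hwMt : Tendsto (fun x => (L₀ - Lm x) / Real.sqrt (x - x₀)) (𝓝[>] x₀)
      (𝓝 (Real.sqrt (2*A/c))) := by
    have h1 := (Real.continuous_sqrt.tendsto _).comp hqM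
    apply h1.congr'
    filter_upwards [hImem] with x hx
    show Real.sqrt ((L₀ - Lm x)^2 / (x - x₀)) = (L₀ - Lm x) / Real.sqrt (x - x₀)
    rw [Real.sqrt_div (sq_nonneg _), Real.sqrt_sq (by linarith [(hLmP x hx).1.2] : (0:ℝ) ≤ L₀ - Lm x)]
  have hfinal : Tendsto (fun x => (Lp x - Lm x) / Real.sqrt (x - x₀)) (𝓝[>] x₀)
      (𝓝 (2 * Real.sqrt (2*A/c))) := by
    have h1 := huPt.add hwMt
    rw [show Real.sqrt (2*A/c) + Real.sqrt (2*A/c) = 2 * Real.sqrt (2*A/c) by ring] at h1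
    apply h1.congr'
    filter_upwards [] with x
    rw [← add_div]
    congr 1
    ring
  have habs : |deriv (fun x => E (x, L₀)) x₀| = A := by
    rw [hA, abs_of_neg hEx]
  -- assemble
  refine ⟨δ, hδpos, ρ, hrpos, Lm, Lp,
    fun x hx => (hLmC x hx).contDiffWithinAt,
    fun x hx => (hLpC x hx).contDiffWithinAt,
    fun x hx => ⟨by linarith [(hLmP x hx).1.2, (hLpP x hx).1.1],
      ⟨(hLmP x hx).1.1, by linarith [(hLmP x hx).1.2]⟩,
      ⟨by linarith [(hLpP x hx).1.1], (hLpP x hx).1.2⟩,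
      hrootset x hx⟩,
    hLmtend, hLptend, hderivPtop, hderivMbot, ?_⟩
  rw [habs]
  exact hfinal
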